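/- Let L be a bounded chain. A function f : L^n → L is a discrete Sugeno integral (i.e., a lattice polynomial function with f(0,...,0)=0 and f(1,...,1)=1) if and only if it is nondecreasing, Boolean min homogeneous, and Boolean max homogeneous. -/

import Mathlib

/-- a function on a bounded chain is a discrete Sugeno integral iff
it is nondecreasing, Boolean min homogeneous, and Boolean max homogeneous. -/
theorem stmt16 {L : Type*} [LinearOrder L] [BoundedOrder L] {n : ℕ}
    (f : (Fin n → L) → L) :
    (∃ μ : Finset (Fin n) → L, (∀ I J, I ⊆ J → μ I ≤ μ J) ∧ μ ∅ = ⊥ ∧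
        μ Finset.univ = ⊤ ∧
        ∀ x, f x = (Finset.univ : Finset (Fin n)).powerset.sup
          (fun I => μ I ⊓ I.inf x)) ↔
    (Monotone f ∧
      (∀ e : Fin n → L, (∀ i, e i = ⊥ ∨ e i = ⊤) →
        ∀ c, f (fun i => e i ⊓ c) = f e ⊓ c) ∧
      (∀ e : Fin n → L, (∀ i, e i = ⊥ ∨ e i = ⊤) →
        ∀ c, f (fun i => e i ⊔ c) = f e ⊔ c)) := by
  constructor
  · rintro ⟨μ, hmono, hbot, htop, hf⟩
    refine ⟨?_, ?_, ?_⟩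
    · intro x y hxy
      rw [hf, hf]
      apply Finset.sup_mono_fun
      intro I _
      exact inf_le_inf_left _ (Finset.inf_mono_fun fun i _ => hxy i)
    · intro e _ c
      rw [hf, hf, Finset.sup_inf_distrib_right]
      apply Finset.sup_congr rfl
      intro I _
      rcases I.eq_empty_or_nonempty with h | h
      · subst h; simp [hbot]
      · have : I.inf (fun i => e i ⊓ c) = I.inf e ⊓ c := by
          obtain ⟨j, hj⟩ := h
          apply le_antisymm
          · exact le_inf (Finset.inf_mono_fun fun i _ => inf_le_left)
              (le_trans (Finset.inf_le hj) inf_le_right)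
          · exact Finset.le_inf fun i hi =>
              inf_le_inf_right _ (Finset.inf_le hi)
        rw [this, inf_assoc]
    · intro e _ c
      rw [hf, hf]
      have key : ∀ I : Finset (Fin n), I.inf (fun i => e i ⊔ c) = I.inf e ⊔ c := by
        intro I
        rw [Finset.inf_sup_distrib_right]
      have hle : c ≤ (Finset.univ : Finset (Fin n)).powerset.sup
          (fun I => μ I ⊓ I.inf (fun i => e i ⊔ c)) := by
        refine le_trans ?_ (Finset.le_sup (Finset.mem_powerset.2 (le_refl Finset.univ)))
        rw [htop, key]
        simp
      apply le_antisymm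
      · apply Finset.sup_le
        intro I hI
        rw [key, inf_sup_left]
        apply sup_le
        · exact le_sup_of_le_left (Finset.le_sup (f := fun I => μ I ⊓ I.inf e) hI)
        · exact le_sup_of_le_right inf_le_right
      · apply sup_le
        · apply Finset.sup_le
          intro I hI
          refine le_trans ?_ (Finset.le_sup hI)
          rw [key]
          exact inf_le_inf_left _ (le_sup_of_le_left le_rfl)
        · exact hle
  · rintro ⟨hmono, hminh, hmaxh⟩
    classical
    set ind : Finset (Fin n) → (Fin n → L) := fun I i => if i ∈ I then ⊤ else ⊥ with hind
    have hindB : ∀ I, ∀ i, ind I i = ⊥ ∨ ind I i = ⊤ := by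
      intro I i; by_cases h : i ∈ I <;> simp [ind, h]
    refine ⟨fun I => f (ind I), ?_, ?_, ?_, ?_⟩
    · intro I J hIJ
      apply hmono
      intro i
      by_cases h : i ∈ I
      · simp [ind, h, hIJ h]
      · simp [ind, h]
    · have := hminh (ind ∅) (hindB ∅) ⊥
      simpa [ind] using this
    · have := hmaxh (ind Finset.univ) (hindB Finset.univ) ⊤
      simpa [ind] using this
    · intro x
      set S := (Finset.univ : Finset (Fin n)).powerset.sup
        (fun I => f (ind I) ⊓ I.inf x) with hS
      apply le_antisymm
      · -- f x ≤ S
        rcases eq_or_lt_of_le (le_top : S ≤ ⊤) with h | hSlt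
        · rw [h]; exact le_top
        set I : Finset (Fin n) := Finset.univ.filter (fun i => S < x i) with hI
        have hmuI : f (ind I) ≤ S := by
          have hterm : f (ind I) ⊓ I.inf x ≤ S := by
            rw [hS]
            exact Finset.le_sup (f := fun J => f (ind J) ⊓ J.inf x)
              (Finset.mem_powerset.2 (Finset.subset_univ I))
          rcases le_total (f (ind I)) (I.inf x) with h | h
          · rwa [inf_eq_left.2 h] at hterm
          · exfalso
            have : I.inf x ≤ S := le_trans (inf_eq_right.2 h ▸ hterm) le_rfl
            rw [Finset.inf_le_iff hSlt] at this
            obtain ⟨i, hi, hxi⟩ := this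
            rw [hI, Finset.mem_filter] at hi
            exact absurd hxi (not_le.2 hi.2)
        have hxle : x ≤ fun i => ind I i ⊔ S := by
          intro i
          by_cases h : i ∈ I
          · simp [ind, h]
          · rw [hI, Finset.mem_filter] at h
            push_neg at h
            have := h (Finset.mem_univ i)
            try simp only [not_lt] at this
            exact le_trans this le_sup_right
        calc f x ≤ f (fun i => ind I i ⊔ S) := hmono hxle
          _ = f (ind I) ⊔ S := hmaxh (ind I) (hindB I) S
          _ ≤ S := sup_le hmuI le_rfl
      · apply Finset.sup_le
        intro I hI
        set c := I.inf x with hc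
        have h1 : (fun i => ind I i ⊓ c) ≤ x := by
          intro i
          by_cases h : i ∈ I
          · simpa [ind, h] using Finset.inf_le h
          · simp [ind, h]
        calc f (ind I) ⊓ c = f (fun i => ind I i ⊓ c) := (hminh (ind I) (hindB I) c).symm
          _ ≤ f x := hmono h1
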